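/- arXiv:1712.02049 — 5 statements merged into one kernel-verified Lean document; each statement's English description precedes it below -/
import Mathlib

section
/- Let z ∈ ℂ with Im z > 0, let T > 0, and let h : [0,T) → ℂ be differentiable with h(0) = z, h(t) ≠ 0, h(t)² ≠ 4t, and h(t)·exp(2t/h(t)²) = z for all t ∈ [0,T). Define g(t) := h(t) + 4t/h(t). Then g(0) = z, and for all t ∈ [0,T): g′(t) = 2/h(t) and 2t·g′(t)² − g(t)·g′(t) + 2 = 0. -/
/-- Branch-free form of Proposition 3.1: if `h e^{2t/h²} = z` on `[0,T)` and
`g t = h t + 4t/h t`, then `g 0 = z`, `g' t = 2/h t` and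
`2t g'² - g g' + 2 = 0`. -/
theorem stmt_2 (z : ℂ) (hz : 0 < z.im) (T : ℝ) (hT : 0 < T)
    (h h' : ℝ → ℂ) (h0 : h 0 = z)
    (hne : ∀ t ∈ Set.Ico (0:ℝ) T, h t ≠ 0)
    (hne2 : ∀ t ∈ Set.Ico (0:ℝ) T, (h t) ^ 2 ≠ 4 * (t : ℂ))
    (hfe : ∀ t ∈ Set.Ico (0:ℝ) T,
      h t * Complex.exp (2 * (t : ℂ) / (h t) ^ 2) = z)
    (hd : ∀ t ∈ Set.Ico (0:ℝ) T, HasDerivAt h (h' t) t) :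
    (fun s : ℝ => h s + 4 * (s : ℂ) / h s) 0 = z ∧
    ∀ t ∈ Set.Ico (0:ℝ) T,
      HasDerivAt (fun s : ℝ => h s + 4 * (s : ℂ) / h s) (2 / h t) t ∧
      2 * (t : ℂ) * (2 / h t) ^ 2
        - (h t + 4 * (t : ℂ) / h t) * (2 / h t) + 2 = 0 := by
  constructor
  · simp [h0]
  intro t ht
  set a := h t with ha
  set b := h' t with hb
  have ha0 : a ≠ 0 := hne t ht
  have ha2 : a ^ 2 ≠ 0 := pow_ne_zero _ ha0
  have hb2 : a ^ 2 - 4 * (t : ℂ) ≠ 0 := sub_ne_zero.mpr (hne2 t ht)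
  -- derivative of the inner exponent e s = 2 s / (h s)^2
  have hcast : HasDerivAt (fun s : ℝ => ((s : ℂ))) 1 t := by
    simpa using (hasDerivAt_id t).ofReal_comp
  have hnum : HasDerivAt (fun s : ℝ => 2 * (s : ℂ)) 2 t := by
    simpa using hcast.const_mul (2 : ℂ)
  have hden : HasDerivAt (fun s : ℝ => (h s) ^ 2) (2 * a * b) t := by
    have h2 : HasDerivAt (fun s : ℝ => h s * h s) (h' t * h t + h t * h' t) t := (hd t ht).mul (hd t ht)
    have heq : (fun s : ℝ => h s * h s) = fun s : ℝ => (h s) ^ 2 := by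
      funext s; ring
    rw [heq] at h2
    convert h2 using 1; ring
  have he : HasDerivAt (fun s : ℝ => 2 * (s : ℂ) / (h s) ^ 2)
      ((2 * a ^ 2 - 2 * (t : ℂ) * (2 * a * b)) / (a ^ 2) ^ 2) t :=
    hnum.div hden ha2
  have hF : HasDerivAt (fun s : ℝ => h s * Complex.exp (2 * (s : ℂ) / (h s) ^ 2))
      (b * Complex.exp (2 * (t : ℂ) / a ^ 2) +
        a * (Complex.exp (2 * (t : ℂ) / a ^ 2) *
          ((2 * a ^ 2 - 2 * (t : ℂ) * (2 * a * b)) / (a ^ 2) ^ 2))) t :=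
    (hd t ht).mul he.cexp
  -- the function is constant z on Ico 0 T, so the derivative vanishes
  have hud : UniqueDiffWithinAt ℝ (Set.Ico (0:ℝ) T) t := uniqueDiffOn_Ico 0 T t ht
  have hzero : b * Complex.exp (2 * (t : ℂ) / a ^ 2) +
        a * (Complex.exp (2 * (t : ℂ) / a ^ 2) *
          ((2 * a ^ 2 - 2 * (t : ℂ) * (2 * a * b)) / (a ^ 2) ^ 2)) = 0 := by
    have h1 : HasDerivWithinAt (fun s : ℝ => h s * Complex.exp (2 * (s : ℂ) / (h s) ^ 2))
        (b * Complex.exp (2 * (t : ℂ) / a ^ 2) +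
          a * (Complex.exp (2 * (t : ℂ) / a ^ 2) *
            ((2 * a ^ 2 - 2 * (t : ℂ) * (2 * a * b)) / (a ^ 2) ^ 2)))
        (Set.Ico (0:ℝ) T) t := hF.hasDerivWithinAt
    have h2 : HasDerivWithinAt (fun s : ℝ => h s * Complex.exp (2 * (s : ℂ) / (h s) ^ 2))
        0 (Set.Ico (0:ℝ) T) t := by
      refine (hasDerivWithinAt_const t _ z).congr (fun s hs => hfe s hs) (hfe t ht)
    have := h1.derivWithin hud
    rw [h2.derivWithin hud] at this
    exact this.symm
  -- extract the key algebraic relation  b (a² - 4t) = -2 a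
  have hexp : Complex.exp (2 * (t : ℂ) / a ^ 2) ≠ 0 := Complex.exp_ne_zero _
  have hkey : b * (a ^ 2 - 4 * (t : ℂ)) = -2 * a := by
    have h3 : b + a * ((2 * a ^ 2 - 2 * (t : ℂ) * (2 * a * b)) / (a ^ 2) ^ 2) = 0 := by
      have := mul_eq_zero.mp (by linear_combination hzero :
        Complex.exp (2 * (t : ℂ) / a ^ 2) *
          (b + a * ((2 * a ^ 2 - 2 * (t : ℂ) * (2 * a * b)) / (a ^ 2) ^ 2)) = 0)
      tauto
    field_simp at h3
    exact mul_left_cancel₀ ha2 (by linear_combination a ^ 2 * h3)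
  -- derivative of g
  have h4s : HasDerivAt (fun s : ℝ => 4 * (s : ℂ)) 4 t := by
    simpa using hcast.const_mul (4 : ℂ)
  have hg : HasDerivAt (fun s : ℝ => h s + 4 * (s : ℂ) / h s)
      (b + (4 * a - 4 * (t : ℂ) * b) / a ^ 2) t :=
    (hd t ht).add (h4s.div (hd t ht) ha0)
  have hval : b + (4 * a - 4 * (t : ℂ) * b) / a ^ 2 = 2 / a := by
    field_simp
    linear_combination hkey
  refine ⟨hval ▸ hg, ?_⟩
  field_simp
  ring
end

section
/- The set {2ir·exp(−iφ − e^{2iφ}/2) : φ ∈ [−π/2, π/2], r ∈ [0,1]} intersected with the real line ℝ equals the closed interval [−2√e, 2√e]. -/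
private lemma sqrtE : Real.sqrt (Real.exp 1) = Real.exp (1/2) := by
  have h : Real.exp 1 = Real.exp (1/2) * Real.exp (1/2) := by rw [← Real.exp_add]; norm_num
  rw [h, Real.sqrt_mul_self (Real.exp_nonneg _)]

private lemma keyExpPos :
    Complex.exp (-(Complex.I * ((Real.pi/2 : ℝ):ℂ))
      - Complex.exp (2 * Complex.I * ((Real.pi/2:ℝ):ℂ)) / 2)
    = -Complex.I * Real.exp (1/2) := by
  have h1 : (2 * Complex.I * ((Real.pi/2:ℝ):ℂ)) = (Real.pi : ℂ) * Complex.I := by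
    push_cast; ring
  rw [h1, Complex.exp_pi_mul_I]
  have h2 : (-(Complex.I * ((Real.pi/2 : ℝ):ℂ)) - (-1)/2)
      = ((1/2 : ℝ):ℂ) + (-(Real.pi/2) : ℝ) * Complex.I := by push_cast; ring
  rw [h2, Complex.exp_add, Complex.exp_mul_I, Complex.ofReal_exp,
    ← Complex.ofReal_cos, ← Complex.ofReal_sin,
    show Real.cos (-(Real.pi/2)) = 0 by simp,
    show Real.sin (-(Real.pi/2)) = -1 by simp]
  push_cast; ring

private lemma keyExpNeg :
    Complex.exp (-(Complex.I * ((-(Real.pi/2) : ℝ):ℂ))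
      - Complex.exp (2 * Complex.I * ((-(Real.pi/2):ℝ):ℂ)) / 2)
    = Complex.I * Real.exp (1/2) := by
  have h1 : (2 * Complex.I * ((-(Real.pi/2):ℝ):ℂ)) = ((-Real.pi : ℝ) : ℂ) * Complex.I := by
    push_cast; ring
  rw [h1, Complex.exp_mul_I, ← Complex.ofReal_cos, ← Complex.ofReal_sin,
    show Real.cos (-Real.pi) = -1 by simp,
    show Real.sin (-Real.pi) = 0 by simp]
  have h2 : (-(Complex.I * ((-(Real.pi/2) : ℝ):ℂ)) - (((-1:ℝ):ℂ) + ((0:ℝ):ℂ) * Complex.I)/2)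
      = ((1/2 : ℝ):ℂ) + ((Real.pi/2) : ℝ) * Complex.I := by push_cast; ring
  rw [h2, Complex.exp_add, Complex.exp_mul_I, Complex.ofReal_exp,
    ← Complex.ofReal_cos, ← Complex.ofReal_sin,
    show Real.cos (Real.pi/2) = 0 by simp,
    show Real.sin (Real.pi/2) = 1 by simp]
  push_cast; ring

/-- The hull `𝒦 = {2ir exp(-iφ - e^{2iφ}/2)}` intersected with the real line
equals the interval `[-2√e, 2√e]`. -/
theorem stmt_9 :
    {z : ℂ | ∃ φ ∈ Set.Icc (-(Real.pi / 2)) (Real.pi / 2), ∃ r ∈ Set.Icc (0:ℝ) 1,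
        z = 2 * Complex.I * (r : ℂ) *
          Complex.exp (-(Complex.I * (φ : ℂ))
            - Complex.exp (2 * Complex.I * (φ : ℂ)) / 2)}
      ∩ Set.range ((↑) : ℝ → ℂ)
    = ((↑) : ℝ → ℂ) ''
        Set.Icc (-(2 * Real.sqrt (Real.exp 1))) (2 * Real.sqrt (Real.exp 1)) := by
  have hE : (0:ℝ) < Real.exp (1/2) := Real.exp_pos _
  ext z
  constructor
  · rintro ⟨⟨φ, hφ, r, hr, hz⟩, x, hx⟩
    refine ⟨x, ?_, hx⟩
    rw [Set.mem_Icc, ← abs_le, sqrtE]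
    have h1 : |x| = ‖z‖ := by rw [← hx, Complex.norm_real, Real.norm_eq_abs]
    have h2 : ‖z‖
        = 2 * r * Real.exp ((-(Complex.I * (φ:ℂ))
            - Complex.exp (2 * Complex.I * (φ:ℂ)) / 2).re) := by
      rw [hz]; simp [map_mul, Complex.norm_exp, Complex.norm_of_nonneg hr.1, hr.1]
    have h3 : (-(Complex.I * (φ:ℂ)) - Complex.exp (2 * Complex.I * (φ:ℂ)) / 2).re
        = -(Real.cos (2*φ))/2 := by
      simp [Complex.exp_re, Complex.div_re]
      ring
    have h4 : Real.exp (-(Real.cos (2*φ))/2) ≤ Real.exp (1/2) := by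
      apply Real.exp_le_exp.mpr
      have := Real.neg_one_le_cos (2*φ)
      linarith
    have h5 : (0:ℝ) < Real.exp (-(Real.cos (2*φ))/2) := Real.exp_pos _
    rw [h1, h2, h3]
    nlinarith [hr.1, hr.2]
  · rintro ⟨x, hx, rfl⟩
    rw [Set.mem_Icc, sqrtE] at hx
    refine ⟨?_, ⟨x, rfl⟩⟩
    rcases le_or_gt 0 x with hx0 | hx0
    · refine ⟨Real.pi/2, ?_, x / (2 * Real.exp (1/2)), ⟨?_, ?_⟩, ?_⟩
      · exact ⟨by linarith [Real.pi_pos], le_rfl⟩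
      · positivity
      · rw [div_le_one (by positivity)]; linarith [hx.2]
      · rw [keyExpPos]
        push_cast
        field_simp
        linear_combination (x:ℂ) * Complex.I_sq
    · refine ⟨-(Real.pi/2), ?_, -x / (2 * Real.exp (1/2)), ⟨?_, ?_⟩, ?_⟩
      · exact ⟨le_rfl, by linarith [Real.pi_pos]⟩
      · exact div_nonneg (by linarith) (by positivity)
      · rw [div_le_one (by positivity)]; linarith [hx.1]
      · rw [keyExpNeg]
        push_cast
        field_simp
        linear_combination (x:ℂ) * Complex.I_sq
end

section
/- Let a > 0, T > 0, and let h : [0,T) → ℂ be differentiable with h(t)² ≠ a² and (h(t)² − a²)² ≠ 4t(h(t)² + a²) for all t ∈ [0,T). Then h satisfies h′(t) = −(2h(t)/(h(t)² − a²)) / (1 − 4t(h(t)² + a²)/(h(t)² − a²)²) for all t ∈ [0,T) if and only if the function t ↦ (h(t)² − a²)·exp(4t·h(t)²/(h(t)² − a²)²) is constant on [0,T). -/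
open Set

lemma hasDerivAt_sq {h h' : ℝ → ℂ} {t : ℝ} (hdt : HasDerivAt h (h' t) t) :
    HasDerivAt (fun s => (h s)^2) (2 * h t * h' t) t := by
  have h2 := hdt.mul hdt
  have e : (fun s => (h s)^2) = fun s => h s * h s := by ext s; ring
  rw [e]
  exact h2.congr_deriv (by ring)

lemma hasDerivAt_F (a : ℝ) (h h' : ℝ → ℂ) (t : ℝ)
    (hD : (h t)^2 - (a:ℂ)^2 ≠ 0) (hdt : HasDerivAt h (h' t) t) :
    HasDerivAt (fun s => ((h s)^2 - (a:ℂ)^2) *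
        Complex.exp (4 * (s:ℂ) * (h s)^2 / ((h s)^2 - (a:ℂ)^2)^2))
      (Complex.exp (4 * (t:ℂ) * (h t)^2 / ((h t)^2 - (a:ℂ)^2)^2) *
        (2 * h t * h' t * (1 - 4 * (t:ℂ) * ((h t)^2 + (a:ℂ)^2) / ((h t)^2 - (a:ℂ)^2)^2)
          + 4 * (h t)^2 / ((h t)^2 - (a:ℂ)^2))) t := by
  have hu : HasDerivAt (fun s => (h s)^2) (2 * h t * h' t) t := hasDerivAt_sq hdt
  have hD' : HasDerivAt (fun s => (h s)^2 - (a:ℂ)^2) (2 * h t * h' t) t :=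
    hu.sub_const _
  have ht' : HasDerivAt (fun s : ℝ => (s:ℂ)) 1 t := by
    simpa using (hasDerivAt_id t).ofReal_comp
  have hN : HasDerivAt (fun s : ℝ => 4 * (s:ℂ) * (h s)^2)
      (4 * 1 * (h t)^2 + 4 * (t:ℂ) * (2 * h t * h' t)) t :=
    (ht'.const_mul (4:ℂ)).mul hu
  have hM : HasDerivAt (fun s => ((h s)^2 - (a:ℂ)^2)^2)
      (2 * ((h t)^2 - (a:ℂ)^2) * (2 * h t * h' t)) t := by
    have := hasDerivAt_sq (h := fun s => (h s)^2 - (a:ℂ)^2) (h' := fun s => 2 * h s * h' s) hD'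
    convert this using 1
  have hM0 : ((h t)^2 - (a:ℂ)^2)^2 ≠ 0 := pow_ne_zero _ hD
  have hg := (hN.div hM hM0).cexp
  have hF := hD'.mul hg
  refine hF.congr_deriv ?_
  simp only [Pi.div_apply]
  field_simp
  ring

/-- Two-source analogue: the ODE (4.4) holds on `[0,T)` iff
`t ↦ (h² - a²) exp(4t h²/(h² - a²)²)` is constant on `[0,T)`. -/
theorem stmt_11 (a : ℝ) (ha : 0 < a) (T : ℝ) (hT : 0 < T) (h h' : ℝ → ℂ)
    (hne : ∀ t ∈ Set.Ico (0:ℝ) T, (h t) ^ 2 ≠ (a : ℂ) ^ 2)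
    (hne2 : ∀ t ∈ Set.Ico (0:ℝ) T,
      ((h t) ^ 2 - (a : ℂ) ^ 2) ^ 2 ≠ 4 * (t : ℂ) * ((h t) ^ 2 + (a : ℂ) ^ 2))
    (hd : ∀ t ∈ Set.Ico (0:ℝ) T, HasDerivAt h (h' t) t) :
    (∀ t ∈ Set.Ico (0:ℝ) T,
        h' t = -(2 * h t / ((h t) ^ 2 - (a : ℂ) ^ 2)) /
          (1 - 4 * (t : ℂ) * ((h t) ^ 2 + (a : ℂ) ^ 2)
            / ((h t) ^ 2 - (a : ℂ) ^ 2) ^ 2))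
    ↔ (∀ s ∈ Set.Ico (0:ℝ) T, ∀ t ∈ Set.Ico (0:ℝ) T,
        ((h s) ^ 2 - (a : ℂ) ^ 2) *
            Complex.exp (4 * (s : ℂ) * (h s) ^ 2 / ((h s) ^ 2 - (a : ℂ) ^ 2) ^ 2)
          = ((h t) ^ 2 - (a : ℂ) ^ 2) *
            Complex.exp (4 * (t : ℂ) * (h t) ^ 2 / ((h t) ^ 2 - (a : ℂ) ^ 2) ^ 2)) := by
  set F : ℝ → ℂ := fun s => ((h s)^2 - (a:ℂ)^2) *
      Complex.exp (4 * (s:ℂ) * (h s)^2 / ((h s)^2 - (a:ℂ)^2)^2) with hFdef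
  have hDne : ∀ t ∈ Set.Ico (0:ℝ) T, (h t)^2 - (a:ℂ)^2 ≠ 0 := fun t ht =>
    sub_ne_zero.mpr (hne t ht)
  have hKne : ∀ t ∈ Set.Ico (0:ℝ) T,
      (1 : ℂ) - 4 * (t:ℂ) * ((h t)^2 + (a:ℂ)^2) / ((h t)^2 - (a:ℂ)^2)^2 ≠ 0 := by
    intro t ht h0
    apply hne2 t ht
    have hM0 : ((h t)^2 - (a:ℂ)^2)^2 ≠ 0 := pow_ne_zero _ (hDne t ht)
    rw [sub_eq_zero, eq_div_iff hM0] at h0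
    linear_combination h0
  constructor
  · -- ODE implies constancy
    intro hode
    have hF0 : ∀ x ∈ Set.Ico (0:ℝ) T, F x = F 0 := by
      intro x hx
      rcases eq_or_lt_of_le hx.1 with hx0 | hx0
      · rw [← hx0]
      have hsub : Set.Icc (0:ℝ) x ⊆ Set.Ico 0 T := fun y hy =>
        ⟨hy.1, lt_of_le_of_lt hy.2 hx.2⟩
      have hcont : ContinuousOn F (Set.Icc 0 x) := fun y hy =>
        (hasDerivAt_F a h h' y (hDne y (hsub hy)) (hd y (hsub hy))).continuousAt.continuousWithinAt
      have hderiv : ∀ y ∈ Set.Ico (0:ℝ) x, HasDerivWithinAt F 0 (Set.Ici y) y := by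
        intro y hy
        have hyT : y ∈ Set.Ico (0:ℝ) T := ⟨hy.1, lt_trans hy.2 hx.2⟩
        have hdF := hasDerivAt_F a h h' y (hDne y hyT) (hd y hyT)
        have hval : Complex.exp (4 * (y:ℂ) * (h y)^2 / ((h y)^2 - (a:ℂ)^2)^2) *
            (2 * h y * h' y * (1 - 4 * (y:ℂ) * ((h y)^2 + (a:ℂ)^2) / ((h y)^2 - (a:ℂ)^2)^2)
              + 4 * (h y)^2 / ((h y)^2 - (a:ℂ)^2)) = 0 := by
        -- substitute the ODE
          rw [hode y hyT, mul_eq_zero]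
          right
          have hK := hKne y hyT
          have e1 := div_mul_cancel₀ (-(2 * h y / ((h y)^2 - (a:ℂ)^2))) hK
          linear_combination (2 * h y) * e1
        rw [hval] at hdF
        exact hdF.hasDerivWithinAt
      exact constant_of_has_deriv_right_zero hcont hderiv x ⟨hx.1, le_refl x⟩
    intro s hs t ht
    exact (hF0 s hs).trans (hF0 t ht).symm
  · -- constancy implies ODE
    intro hconst
    have hFzero : ∀ t ∈ Set.Ico (0:ℝ) T,
        2 * h t * h' t * (1 - 4 * (t:ℂ) * ((h t)^2 + (a:ℂ)^2) / ((h t)^2 - (a:ℂ)^2)^2)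
          + 4 * (h t)^2 / ((h t)^2 - (a:ℂ)^2) = 0 := by
      intro t ht
      have hdF := hasDerivAt_F a h h' t (hDne t ht) (hd t ht)
      have h1 : HasDerivWithinAt F
          (Complex.exp (4 * (t:ℂ) * (h t)^2 / ((h t)^2 - (a:ℂ)^2)^2) *
            (2 * h t * h' t * (1 - 4 * (t:ℂ) * ((h t)^2 + (a:ℂ)^2) / ((h t)^2 - (a:ℂ)^2)^2)
              + 4 * (h t)^2 / ((h t)^2 - (a:ℂ)^2))) (Set.Ico 0 T) t :=
        hdF.hasDerivWithinAt
      have h2 : HasDerivWithinAt F 0 (Set.Ico 0 T) t := by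
        have hc : HasDerivWithinAt (fun _ : ℝ => F 0) (0:ℂ) (Set.Ico 0 T) t :=
          (hasDerivAt_const t (F 0)).hasDerivWithinAt
        exact hc.congr (fun y hy => hconst y hy 0 ⟨le_refl 0, hT⟩) (hconst t ht 0 ⟨le_refl 0, hT⟩)
      have huniq : UniqueDiffWithinAt ℝ (Set.Ico (0:ℝ) T) t := uniqueDiffOn_Ico 0 T t ht
      have := (h1.derivWithin huniq).symm.trans (h2.derivWithin huniq)
      exact (mul_eq_zero.mp this).resolve_left (Complex.exp_ne_zero _)
    -- from hFzero, get the polynomial identity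
    have hz3 : ∀ t ∈ Set.Ico (0:ℝ) T,
        2 * h t * h' t * (1 - 4 * (t:ℂ) * ((h t)^2 + (a:ℂ)^2) / ((h t)^2 - (a:ℂ)^2)^2)
            * ((h t)^2 - (a:ℂ)^2) + 4 * (h t)^2 = 0 := by
      intro t ht
      have hz := hFzero t ht
      have hD := hDne t ht
      linear_combination ((h t)^2 - (a:ℂ)^2) * hz - div_mul_cancel₀ (4 * (h t)^2) hD
    intro t ht
    by_cases h0 : h t = 0
    · -- Gronwall: h ≡ 0 on [t, b], so h' t = 0
      set b := (t + T) / 2 with hb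
      have htb : t < b := by simp only [hb]; linarith [ht.2]
      have hbT : b < T := by simp only [hb]; linarith [ht.2]
      have hsub : Set.Icc t b ⊆ Set.Ico 0 T := fun y hy =>
        ⟨le_trans ht.1 hy.1, lt_of_le_of_lt hy.2 hbT⟩
      set c : ℝ → ℂ := fun s => -4 / (((h s)^2 - (a:ℂ)^2) *
        (1 - 4 * (s:ℂ) * ((h s)^2 + (a:ℂ)^2) / ((h s)^2 - (a:ℂ)^2)^2)) with hc
      have hhc : ContinuousOn h (Set.Icc t b) := fun y hy =>
        (hd y (hsub hy)).continuousAt.continuousWithinAt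
      have hccont : ContinuousOn c (Set.Icc t b) := by
        apply ContinuousOn.div continuousOn_const
        · apply ContinuousOn.mul
          · exact (hhc.pow 2).sub continuousOn_const
          · apply ContinuousOn.sub continuousOn_const
            apply ContinuousOn.div
            · exact (continuousOn_const.mul (Complex.continuous_ofReal.continuousOn)).mul
                ((hhc.pow 2).add continuousOn_const)
            · exact ((hhc.pow 2).sub continuousOn_const).pow 2
            · intro y hy
              exact pow_ne_zero _ (hDne y (hsub hy))
        · intro y hy
          exact mul_ne_zero (hDne y (hsub hy)) (hKne y (hsub hy))
      obtain ⟨M, hM⟩ := (isCompact_Icc).exists_bound_of_continuousOn hccont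
      have hu' : ∀ y ∈ Set.Ico t b, HasDerivWithinAt (fun s => (h s)^2)
          (c y * (h y)^2) (Set.Ici y) y := by
        intro y hy
        have hyT : y ∈ Set.Ico (0:ℝ) T := hsub ⟨hy.1, le_of_lt hy.2⟩
        have hder := hasDerivAt_sq (hd y hyT)
        have hD := hDne y hyT
        have hK := hKne y hyT
        have heq : 2 * h y * h' y = c y * (h y)^2 := by
          simp only [hc]
          rw [div_mul_eq_mul_div, eq_div_iff (mul_ne_zero hD hK)]
          linear_combination hz3 y hyT
        rw [heq] at hder
        exact hder.hasDerivWithinAt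
      have hcont : ContinuousOn (fun s => (h s)^2) (Set.Icc t b) := hhc.pow 2
      have hgr := norm_le_gronwallBound_of_norm_deriv_right_le (δ := 0) (K := M) (ε := 0)
        hcont hu' (by simp [h0]) (fun y hy => by
          rw [norm_mul, add_zero]
          exact mul_le_mul_of_nonneg_right (hM y (Set.Ico_subset_Icc_self hy)) (norm_nonneg _))
      have hzero : ∀ y ∈ Set.Icc t b, h y = 0 := by
        intro y hy
        have h1 := hgr y hy
        rw [gronwallBound_ε0, zero_mul] at h1
        have h2 : ‖(h y)^2‖ = 0 := le_antisymm h1 (norm_nonneg _)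
        exact (pow_eq_zero_iff two_ne_zero).mp (norm_eq_zero.mp h2)
      have hd0 : HasDerivWithinAt h (h' t) (Set.Icc t b) t :=
        (hd t ht).hasDerivWithinAt
      have hd0' : HasDerivWithinAt h 0 (Set.Icc t b) t := by
        have hc0 : HasDerivWithinAt (fun _ : ℝ => (0:ℂ)) 0 (Set.Icc t b) t :=
          (hasDerivAt_const t (0:ℂ)).hasDerivWithinAt
        exact hc0.congr (fun y hy => hzero y hy) (hzero t ⟨le_refl t, le_of_lt htb⟩)
      have huniq : UniqueDiffWithinAt ℝ (Set.Icc t b) t :=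
        uniqueDiffOn_Icc htb t ⟨le_refl t, le_of_lt htb⟩
      have hzero' : h' t = 0 := (hd0.derivWithin huniq).symm.trans (hd0'.derivWithin huniq)
      rw [hzero', h0]
      simp
    · -- h t ≠ 0 : solve
      have hD := hDne t ht
      have hK := hKne t ht
      rw [eq_div_iff hK, ← neg_div, eq_div_iff hD]
      have key : 2 * h t * (h' t *
          (1 - 4 * (t:ℂ) * ((h t)^2 + (a:ℂ)^2) / ((h t)^2 - (a:ℂ)^2)^2)
            * ((h t)^2 - (a:ℂ)^2) + 2 * h t) = 0 := by
        linear_combination hz3 t ht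
      have h2 := (mul_eq_zero.mp key).resolve_left (by
        simpa using h0)
      linear_combination h2
end

section
/- Let a > 0, z ∈ ℂ with Im z > 0, T > 0, and let h : [0,T) → ℂ be differentiable with h(0) = z, h(t)² ≠ a², (h(t)² − a²)² ≠ 4t(h(t)² + a²), and (h(t)² − a²)·exp(4t·h(t)²/(h(t)² − a²)²) = z² − a² for all t ∈ [0,T). Define g(t) := h(t) + 4t·h(t)/(h(t)² − a²). Then g(0) = z and g′(t) = 2h(t)/(h(t)² − a²) for all t ∈ [0,T). -/
/-- Branch-free form of Proposition 4.1: if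
`(h² - a²) exp(4t h²/(h² - a²)²) = z² - a²` on `[0,T)` and
`g t = h t + 4t h t/(h t² - a²)`, then `g 0 = z` and
`g' t = 2 h t/(h t² - a²)`. -/
theorem stmt_12 (a : ℝ) (ha : 0 < a) (z : ℂ) (hz : 0 < z.im)
    (T : ℝ) (hT : 0 < T) (h h' : ℝ → ℂ) (h0 : h 0 = z)
    (hne : ∀ t ∈ Set.Ico (0:ℝ) T, (h t) ^ 2 ≠ (a : ℂ) ^ 2)
    (hne2 : ∀ t ∈ Set.Ico (0:ℝ) T,
      ((h t) ^ 2 - (a : ℂ) ^ 2) ^ 2 ≠ 4 * (t : ℂ) * ((h t) ^ 2 + (a : ℂ) ^ 2))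
    (hfe : ∀ t ∈ Set.Ico (0:ℝ) T,
      ((h t) ^ 2 - (a : ℂ) ^ 2) *
          Complex.exp (4 * (t : ℂ) * (h t) ^ 2 / ((h t) ^ 2 - (a : ℂ) ^ 2) ^ 2)
        = z ^ 2 - (a : ℂ) ^ 2)
    (hd : ∀ t ∈ Set.Ico (0:ℝ) T, HasDerivAt h (h' t) t) :
    (fun s : ℝ => h s + 4 * (s : ℂ) * h s / ((h s) ^ 2 - (a : ℂ) ^ 2)) 0 = z ∧
    ∀ t ∈ Set.Ico (0:ℝ) T,
      HasDerivAt (fun s : ℝ => h s + 4 * (s : ℂ) * h s / ((h s) ^ 2 - (a : ℂ) ^ 2))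
        (2 * h t / ((h t) ^ 2 - (a : ℂ) ^ 2)) t := by
  constructor
  · simp [h0]
  intro t ht
  have ht' : t ∈ Set.Ico (0:ℝ) T := ht
  set c := h t with hc
  set d := h' t with hdd
  have he : c ^ 2 - (a:ℂ)^2 ≠ 0 := sub_ne_zero.2 (hne t ht')
  have hD : (c^2 - (a:ℂ)^2)^2 - 4*(t:ℂ)*(c^2+(a:ℂ)^2) ≠ 0 := sub_ne_zero.2 (hne2 t ht')
  have hE : Complex.exp (4*(t:ℂ)*c^2/(c^2-(a:ℂ)^2)^2) ≠ 0 := Complex.exp_ne_zero _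
  have hid : HasDerivAt (fun s : ℝ => (s:ℂ)) 1 t := by
    simpa using (hasDerivAt_id t).ofReal_comp
  have hh2 : HasDerivAt (fun s : ℝ => (h s)^2) (2*c*d) t := by
    have h2 := (hd t ht').mul (hd t ht')
    have hfun : (fun s : ℝ => (h s)^2) = fun s => h s * h s := by
      funext s; ring
    rw [hfun]; exact h2.congr_deriv (by ring)
  have he2 : HasDerivAt (fun s : ℝ => (h s)^2 - (a:ℂ)^2) (2*c*d) t := hh2.sub_const _
  have hnum : HasDerivAt (fun s : ℝ => 4*(s:ℂ)*(h s)^2)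
      (4*c^2 + 4*(t:ℂ)*(2*c*d)) t := by
    have := (hid.const_mul (4:ℂ)).mul hh2
    exact this.congr_deriv (by ring)
  have hden : HasDerivAt (fun s : ℝ => ((h s)^2 - (a:ℂ)^2)^2)
      (2*(c^2-(a:ℂ)^2)*(2*c*d)) t := by
    have h2 := he2.mul he2
    have hfun : (fun s : ℝ => ((h s)^2 - (a:ℂ)^2)^2)
        = fun s : ℝ => ((h s)^2 - (a:ℂ)^2) * ((h s)^2 - (a:ℂ)^2) := by
      funext s; ring
    rw [hfun]; exact h2.congr_deriv (by ring)
  have hφ : HasDerivAt (fun s : ℝ => 4*(s:ℂ)*(h s)^2/((h s)^2-(a:ℂ)^2)^2)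
      (((4*c^2 + 4*(t:ℂ)*(2*c*d)) * (c^2-(a:ℂ)^2)^2
        - 4*(t:ℂ)*c^2 * (2*(c^2-(a:ℂ)^2)*(2*c*d))) / ((c^2-(a:ℂ)^2)^2)^2) t :=
    hnum.div hden (pow_ne_zero 2 he)
  have hF : HasDerivAt
      (fun s : ℝ => ((h s)^2 - (a:ℂ)^2) * Complex.exp (4*(s:ℂ)*(h s)^2/((h s)^2-(a:ℂ)^2)^2))
      ((2*c*d) * Complex.exp (4*(t:ℂ)*c^2/(c^2-(a:ℂ)^2)^2)
        + (c^2-(a:ℂ)^2) * (Complex.exp (4*(t:ℂ)*c^2/(c^2-(a:ℂ)^2)^2) *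
          (((4*c^2 + 4*(t:ℂ)*(2*c*d)) * (c^2-(a:ℂ)^2)^2
        - 4*(t:ℂ)*c^2 * (2*(c^2-(a:ℂ)^2)*(2*c*d))) / ((c^2-(a:ℂ)^2)^2)^2))) t :=
    he2.mul hφ.cexp
  have hF0 : HasDerivWithinAt
      (fun s : ℝ => ((h s)^2 - (a:ℂ)^2) * Complex.exp (4*(s:ℂ)*(h s)^2/((h s)^2-(a:ℂ)^2)^2))
      0 (Set.Ico 0 T) t :=
    (hasDerivWithinAt_const t _ (z^2 - (a:ℂ)^2)).congr (fun x hx => hfe x hx) (hfe t ht')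
  have hud : UniqueDiffWithinAt ℝ (Set.Ico (0:ℝ) T) t := uniqueDiffOn_Ico 0 T t ht'
  have hzero : (2*c*d) * Complex.exp (4*(t:ℂ)*c^2/(c^2-(a:ℂ)^2)^2)
        + (c^2-(a:ℂ)^2) * (Complex.exp (4*(t:ℂ)*c^2/(c^2-(a:ℂ)^2)^2) *
          (((4*c^2 + 4*(t:ℂ)*(2*c*d)) * (c^2-(a:ℂ)^2)^2
        - 4*(t:ℂ)*c^2 * (2*(c^2-(a:ℂ)^2)*(2*c*d))) / ((c^2-(a:ℂ)^2)^2)^2)) = 0 := by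
    have h1 := hF.hasDerivWithinAt.derivWithin hud
    have h2 := hF0.derivWithin hud
    rw [h1] at h2; exact h2
  have hc0 : c ≠ 0 := by
    intro h0'
    have hfe' := hfe t ht'
    rw [← hc, h0'] at hfe'
    simp at hfe'
    have hz0 : z = 0 := by
      have : z ^ 2 = 0 := by linear_combination -hfe'
      exact pow_eq_zero_iff (by norm_num) |>.mp this
    rw [hz0] at hz; simp at hz
  -- divide out the exponential
  have h4 : (2*c*d) + (c^2-(a:ℂ)^2) *
      (((4*c^2 + 4*(t:ℂ)*(2*c*d)) * (c^2-(a:ℂ)^2)^2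
        - 4*(t:ℂ)*c^2 * (2*(c^2-(a:ℂ)^2)*(2*c*d))) / ((c^2-(a:ℂ)^2)^2)^2) = 0 := by
    have hfac : Complex.exp (4*(t:ℂ)*c^2/(c^2-(a:ℂ)^2)^2) *
        ((2*c*d) + (c^2-(a:ℂ)^2) *
      (((4*c^2 + 4*(t:ℂ)*(2*c*d)) * (c^2-(a:ℂ)^2)^2
        - 4*(t:ℂ)*c^2 * (2*(c^2-(a:ℂ)^2)*(2*c*d))) / ((c^2-(a:ℂ)^2)^2)^2)) = 0 := by
      linear_combination hzero
    exact (mul_eq_zero.mp hfac).resolve_left hE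
  have key : d * ((c^2-(a:ℂ)^2)^2 - 4*(t:ℂ)*(c^2+(a:ℂ)^2)) = -(2*c*(c^2-(a:ℂ)^2)) := by
    have h5 := h4
    field_simp at h5
    have h6 : (2*c*(c^2-(a:ℂ)^2)^2) * (d * ((c^2-(a:ℂ)^2)^2 - 4*(t:ℂ)*(c^2+(a:ℂ)^2)))
        = (2*c*(c^2-(a:ℂ)^2)^2) * (-(2*c*(c^2-(a:ℂ)^2))) := by
      linear_combination (c^2-(a:ℂ)^2)^2 * h5
    exact mul_left_cancel₀ (mul_ne_zero (mul_ne_zero two_ne_zero hc0) (pow_ne_zero 2 he)) h6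
  -- now the derivative of g
  have hnum2 : HasDerivAt (fun s : ℝ => 4*(s:ℂ)*h s) (4*c + 4*(t:ℂ)*d) t := by
    have := (hid.const_mul (4:ℂ)).mul (hd t ht')
    exact this.congr_deriv (by ring)
  have hg2 : HasDerivAt (fun s : ℝ => 4*(s:ℂ)*h s/((h s)^2-(a:ℂ)^2))
      (((4*c+4*(t:ℂ)*d)*(c^2-(a:ℂ)^2) - 4*(t:ℂ)*c*(2*c*d))/(c^2-(a:ℂ)^2)^2) t :=
    hnum2.div he2 he
  have hg := (hd t ht').add hg2
  refine hg.congr_deriv ?_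
  field_simp
  rw [← hdd]
  linear_combination key
end

section
/- Define F(z) = 1 + (z² − 1)·exp(z²/(z² − 1)²) for z ∈ ℂ with z² ≠ 1. Then as z → 0, F(z) = −(3/2)z⁴ + O(z⁶); that is, the function z ↦ F(z) + (3/2)z⁴ is O(|z|⁶) as z → 0. -/
open Asymptotics

/-- `F(z) = 1 + (z² - 1) exp(z²/(z² - 1)²)` (equation (4.9) at `t_c = 1/4`). -/
noncomputable def Fc (z : ℂ) : ℂ :=
  1 + (z ^ 2 - 1) * Complex.exp (z ^ 2 / (z ^ 2 - 1) ^ 2)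

/-- Third-order Taylor remainder of `exp` is `O(w³)` at `0`. -/
lemma exp_taylor3_bigO :
    (fun w : ℂ => Complex.exp w - (1 + w + w ^ 2 / 2)) =O[nhds 0] fun w => w ^ 3 := by
  apply IsBigO.of_bound (2 / 9)
  have h1 : Metric.closedBall (0 : ℂ) 1 ∈ nhds (0 : ℂ) :=
    Metric.closedBall_mem_nhds 0 one_pos
  filter_upwards [h1] with w hw
  have hw1 : ‖w‖ ≤ 1 := by
    simpa [Complex.dist_eq] using Metric.mem_closedBall.mp hw
  have h := Complex.exp_bound hw1 (n := 3) (by norm_num)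
  have hsum : (∑ m ∈ Finset.range 3, w ^ m / m.factorial) = 1 + w + w ^ 2 / 2 := by
    simp [Finset.sum_range_succ, Nat.factorial]
  rw [hsum] at h
  have h2 : ‖w‖ ^ 3 * ((Nat.succ 3 : ℝ) * ((Nat.factorial 3 : ℝ) * 3)⁻¹)
      = 2 / 9 * ‖w ^ 3‖ := by
    rw [norm_pow]
    norm_num [Nat.factorial]
    ring
  exact h.trans h2.le

/-- Expansion (4.25): `F(z) = -(3/2)z⁴ + O(z⁶)` as `z → 0`. -/
theorem stmt_18 :
    (fun z : ℂ => Fc z + (3 / 2) * z ^ 4) =O[nhds 0] fun z : ℂ => z ^ 6 := by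
  have hne : ∀ᶠ z : ℂ in nhds 0, z ^ 2 - 1 ≠ 0 := by
    have hc : ContinuousAt (fun z : ℂ => z ^ 2 - 1) 0 := by fun_prop
    have h0 : (fun z : ℂ => z ^ 2 - 1) 0 ≠ 0 := by norm_num
    exact hc.eventually_ne h0
  -- the rational part
  have hA : (fun z : ℂ => z ^ 6 * ((3 * z ^ 4 - 7 * z ^ 2 + 5) / (2 * (z ^ 2 - 1) ^ 3)))
      =O[nhds 0] fun z : ℂ => z ^ 6 := by
    have hg : Filter.Tendsto
        (fun z : ℂ => (3 * z ^ 4 - 7 * z ^ 2 + 5) / (2 * (z ^ 2 - 1) ^ 3)) (nhds 0)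
        (nhds ((3 * (0:ℂ) ^ 4 - 7 * 0 ^ 2 + 5) / (2 * ((0:ℂ) ^ 2 - 1) ^ 3))) :=
      Filter.Tendsto.div (Continuous.tendsto (by continuity) 0)
        (Continuous.tendsto (by continuity) 0) (by norm_num)
    have := (isBigO_refl (fun z : ℂ => z ^ 6) (nhds 0)).mul (hg.isBigO_one ℂ)
    simpa using this
  -- the exponential remainder part
  have hw : Filter.Tendsto (fun z : ℂ => z ^ 2 / (z ^ 2 - 1) ^ 2) (nhds 0) (nhds 0) := by
    have h : Filter.Tendsto (fun z : ℂ => z ^ 2 / (z ^ 2 - 1) ^ 2) (nhds 0)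
        (nhds ((0:ℂ) ^ 2 / ((0:ℂ) ^ 2 - 1) ^ 2)) :=
      Filter.Tendsto.div (Continuous.tendsto (by continuity) 0)
        (Continuous.tendsto (by continuity) 0) (by norm_num)
    simpa using h
  have hr : (fun z : ℂ =>
      Complex.exp (z ^ 2 / (z ^ 2 - 1) ^ 2) -
        (1 + z ^ 2 / (z ^ 2 - 1) ^ 2 + (z ^ 2 / (z ^ 2 - 1) ^ 2) ^ 2 / 2))
      =O[nhds 0] fun z : ℂ => (z ^ 2 / (z ^ 2 - 1) ^ 2) ^ 3 :=
    exp_taylor3_bigO.comp_tendsto hw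
  have hB : (fun z : ℂ => (z ^ 2 - 1) *
      (Complex.exp (z ^ 2 / (z ^ 2 - 1) ^ 2) -
        (1 + z ^ 2 / (z ^ 2 - 1) ^ 2 + (z ^ 2 / (z ^ 2 - 1) ^ 2) ^ 2 / 2)))
      =O[nhds 0] fun z : ℂ => z ^ 6 := by
    have h2 := (isBigO_refl (fun z : ℂ => z ^ 2 - 1) (nhds 0)).mul hr
    refine h2.trans ?_
    have heq : (fun z : ℂ => (z ^ 2 - 1) * (z ^ 2 / (z ^ 2 - 1) ^ 2) ^ 3)
        =ᶠ[nhds 0] fun z : ℂ => z ^ 6 * (1 / (z ^ 2 - 1) ^ 5) := by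
      filter_upwards [hne] with z hz
      field_simp
    refine heq.trans_isBigO ?_
    have hg : Filter.Tendsto (fun z : ℂ => 1 / (z ^ 2 - 1) ^ 5) (nhds 0)
        (nhds (1 / ((0:ℂ) ^ 2 - 1) ^ 5)) :=
      Filter.Tendsto.div (Continuous.tendsto (by continuity) 0)
        (Continuous.tendsto (by continuity) 0) (by norm_num)
    have := (isBigO_refl (fun z : ℂ => z ^ 6) (nhds 0)).mul (hg.isBigO_one ℂ)
    simpa using this
  have hfe : (fun z : ℂ => Fc z + (3 / 2) * z ^ 4) =ᶠ[nhds 0]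
      (fun z : ℂ =>
        z ^ 6 * ((3 * z ^ 4 - 7 * z ^ 2 + 5) / (2 * (z ^ 2 - 1) ^ 3)) +
        (z ^ 2 - 1) *
          (Complex.exp (z ^ 2 / (z ^ 2 - 1) ^ 2) -
            (1 + z ^ 2 / (z ^ 2 - 1) ^ 2 + (z ^ 2 / (z ^ 2 - 1) ^ 2) ^ 2 / 2))) := by
    filter_upwards [hne] with z hz
    unfold Fc
    have key : (1 : ℂ) + (z ^ 2 - 1) *
        (1 + z ^ 2 / (z ^ 2 - 1) ^ 2 + (z ^ 2 / (z ^ 2 - 1) ^ 2) ^ 2 / 2) + (3 / 2) * z ^ 4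
        = z ^ 6 * ((3 * z ^ 4 - 7 * z ^ 2 + 5) / (2 * (z ^ 2 - 1) ^ 3)) := by
      field_simp [hz]
      ring
    linear_combination key
  exact hfe.trans_isBigO (hA.add hB)
end
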